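/- For θ ∈ (0, π/2), among all pairs of holomorphic functions (F₁, F₂) on the unit disc 𝔹 with cos θ · F₁ + sin θ · z · F₂ = 1 and F₁, F₂ ∈ L²(𝔹), the minimum of ∫_𝔹 (|F₁|² + |F₂|²) dλ equals π/cos²θ, attained at (F₁, F₂) = (1/cos θ, 0). -/

import Mathlib

open MeasureTheory Metric Set
open scoped Real

lemma circle_mean {g : ℂ → ℂ} (hd : DifferentiableOn ℂ g (ball 0 1))
    {ρ : ℝ} (h0 : 0 < ρ) (h1 : ρ < 1) :
    ∫ θ in (0:ℝ)..(2*Real.pi), g (circleMap 0 ρ θ) = 2 * Real.pi * g 0 := by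
  have hcl : closedBall (0:ℂ) ρ ⊆ ball 0 1 := closedBall_subset_ball h1
  have hdc : DiffContOnCl ℂ g (ball 0 ρ) := by
    refine ⟨hd.mono (ball_subset_ball h1.le), ?_⟩
    rw [closure_ball (0:ℂ) h0.ne']
    exact hd.continuousOn.mono hcl
  have key := hdc.circleIntegral_sub_inv_smul (mem_ball_self h0)
  rw [circleIntegral] at key
  have : ∀ θ : ℝ, deriv (circleMap 0 ρ) θ • (circleMap 0 ρ θ - 0)⁻¹ • g (circleMap 0 ρ θ)
      = Complex.I * g (circleMap 0 ρ θ) := by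
    intro θ
    have hne : circleMap 0 ρ θ ≠ 0 := circleMap_ne_center h0.ne'
    simp only [deriv_circleMap, smul_eq_mul, sub_zero]
    field_simp
  simp only [this] at key
  rw [intervalIntegral.integral_const_mul] at key
  have hI : (Complex.I : ℂ) ≠ 0 := Complex.I_ne_zero
  rw [smul_eq_mul] at key
  have : Complex.I * ∫ (x : ℝ) in (0:ℝ)..2 * Real.pi, g (circleMap 0 ρ x)
      = Complex.I * (2 * Real.pi * g 0) := by rw [key]; push_cast; ring
  exact mul_left_cancel₀ hI this

lemma disc_mean_r {g : ℂ → ℂ} (hd : DifferentiableOn ℂ g (ball 0 1))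
    {r : ℝ} (h0 : 0 < r) (h1 : r < 1) :
    ∫ z in ball (0:ℂ) r, g z = (Real.pi * r ^ 2 : ℝ) * g 0 := by
  have hφ : ∀ p : ℝ × ℝ, Complex.polarCoord.symm p = circleMap 0 p.1 p.2 := by
    intro p
    rw [Complex.polarCoord_symm_apply, circleMap]
    push_cast [Complex.exp_mul_I]
    ring
  have key := Complex.integral_comp_polarCoord_symm (Set.indicator (ball (0:ℂ) r) g)
  rw [integral_indicator measurableSet_ball] at key
  rw [← key]
  have hS : MeasurableSet (Ioo (0:ℝ) r ×ˢ Ioo (-π) π) :=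
    (measurableSet_Ioo.prod measurableSet_Ioo)
  have hsub : Ioo (0:ℝ) r ×ˢ Ioo (-π) π ⊆ polarCoord.target := by
    rintro ⟨x, y⟩ ⟨hx, hy⟩
    exact ⟨hx.1, hy⟩
  have step1 : (∫ p in polarCoord.target,
        p.1 • Set.indicator (ball (0:ℂ) r) g (Complex.polarCoord.symm p))
      = ∫ p in Ioo (0:ℝ) r ×ˢ Ioo (-π) π, p.1 • g (circleMap 0 p.1 p.2) := by
    rw [← Set.inter_eq_self_of_subset_right hsub, ← setIntegral_indicator hS]
    apply setIntegral_congr_fun polarCoord.open_target.measurableSet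
    rintro ⟨x, y⟩ hp
    have hx : 0 < x := hp.1
    dsimp only
    have hmem : Complex.polarCoord.symm (x, y) ∈ ball (0:ℂ) r ↔ x < r := by
      rw [mem_ball_zero_iff, Complex.norm_polarCoord_symm]
      simp [abs_of_pos hx]
    by_cases hxr : x < r
    · rw [Set.indicator_of_mem (hmem.mpr hxr),
        Set.indicator_of_mem (by exact ⟨⟨hx, hxr⟩, hp.2⟩), hφ]
    · rw [Set.indicator_of_notMem (fun h => hxr (hmem.mp h)),
        Set.indicator_of_notMem (by rintro ⟨⟨_, h⟩, _⟩; exact hxr h), smul_zero]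
  rw [step1]
  -- continuity/integrability
  have hgc : ContinuousOn g (closedBall (0:ℂ) r) :=
    hd.continuousOn.mono (closedBall_subset_ball h1)
  have hcont : ContinuousOn (fun p : ℝ × ℝ => p.1 • g (circleMap 0 p.1 p.2))
      (Icc (0:ℝ) r ×ˢ Icc (-π) π) := by
    have hmap : MapsTo (fun p : ℝ × ℝ => circleMap 0 p.1 p.2)
        (Icc (0:ℝ) r ×ˢ Icc (-π) π) (closedBall (0:ℂ) r) := by
      rintro ⟨x, y⟩ ⟨hx, _⟩
      rw [mem_closedBall_zero_iff, norm_circleMap_zero,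
        abs_of_nonneg hx.1]
      exact hx.2
    have hc : Continuous (fun p : ℝ × ℝ => circleMap 0 p.1 p.2) := by
      simp only [circleMap]
      fun_prop
    exact continuousOn_fst.smul (hgc.comp hc.continuousOn hmap)
  have hint : IntegrableOn (fun p : ℝ × ℝ => p.1 • g (circleMap 0 p.1 p.2))
      (Ioo (0:ℝ) r ×ˢ Ioo (-π) π) := by
    refine (hcont.integrableOn_compact (isCompact_Icc.prod isCompact_Icc)).mono_set ?_
    exact Set.prod_mono Ioo_subset_Icc_self Ioo_subset_Icc_self
  rw [Measure.volume_eq_prod, setIntegral_prod _ (by rwa [← Measure.volume_eq_prod])]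
  have inner : ∀ x ∈ Ioo (0:ℝ) r,
      (∫ y in Ioo (-π) π, x • g (circleMap 0 x y)) = x • ((2 * π * g 0 : ℂ)) := by
    intro x hx
    rw [integral_smul]
    congr 1
    have hper : Function.Periodic (fun y => g (circleMap 0 x y)) (2 * π) :=
      (periodic_circleMap 0 x).comp g
    have h1' : (∫ y in Ioo (-π) π, g (circleMap 0 x y))
        = ∫ y in (-π)..π, g (circleMap 0 x y) := by
      rw [intervalIntegral.integral_of_le (by linarith [Real.pi_pos]),
        integral_Ioc_eq_integral_Ioo]
    rw [h1']
    have h2' := hper.intervalIntegral_add_eq (-π) 0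
    simp only [zero_add] at h2'
    have : -π + 2 * π = π := by ring
    rw [this] at h2'
    rw [h2']
    exact circle_mean hd hx.1 (hx.2.trans h1)
  rw [setIntegral_congr_fun measurableSet_Ioo inner]
  rw [integral_smul_const]
  have : (∫ x in Ioo (0:ℝ) r, x) = r ^ 2 / 2 := by
    rw [← integral_Ioc_eq_integral_Ioo, ← intervalIntegral.integral_of_le h0.le]
    simp [sq]
  rw [this, Complex.real_smul]
  push_cast
  ring

lemma disc_mean {g : ℂ → ℂ} (hd : DifferentiableOn ℂ g (ball 0 1))
    (hi : IntegrableOn g (ball (0:ℂ) 1)) :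
    ∫ z in ball (0:ℂ) 1, g z = (Real.pi : ℝ) * g 0 := by
  set r : ℕ → ℝ := fun n => 1 - 1 / (n + 1) with hr
  have hr0 : ∀ n : ℕ, 0 ≤ r n := by
    intro n
    have : 1 / ((n:ℝ) + 1) ≤ 1 := by
      rw [div_le_one (by positivity)]; linarith [Nat.cast_nonneg (α := ℝ) n]
    simp only [hr, sub_nonneg]
    rw [div_le_one (by positivity)]
    linarith [Nat.cast_nonneg (α := ℝ) n]
  have hr1 : ∀ n : ℕ, r n < 1 := by
    intro n; simp only [hr]
    have : 0 < 1 / ((n:ℝ) + 1) := by positivity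
    linarith
  have hmono : Monotone (fun n : ℕ => ball (0:ℂ) (r n)) := by
    intro m n hmn
    apply ball_subset_ball
    simp only [hr]
    have : 1 / ((n:ℝ) + 1) ≤ 1 / ((m:ℝ) + 1) := by
      apply one_div_le_one_div_of_le (by positivity)
      have := Nat.cast_le (α := ℝ).mpr hmn
      linarith
    linarith
  have hunion : (⋃ n : ℕ, ball (0:ℂ) (r n)) = ball (0:ℂ) 1 := by
    apply Subset.antisymm
    · exact iUnion_subset fun n => ball_subset_ball (hr1 n).le
    · intro z hz
      rw [mem_ball_zero_iff] at hz
      obtain ⟨n, hn⟩ := exists_nat_one_div_lt (show (0:ℝ) < 1 - ‖z‖ by linarith)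
      refine mem_iUnion.mpr ⟨n, ?_⟩
      rw [mem_ball_zero_iff]
      simp only [hr]
      linarith
  have hlim := tendsto_setIntegral_of_monotone (fun n => measurableSet_ball) hmono
    (hunion ▸ hi)
  rw [hunion] at hlim
  have hlim2 : Filter.Tendsto (fun n : ℕ => ∫ z in ball (0:ℂ) (r n), g z)
      Filter.atTop (nhds ((Real.pi : ℂ) * g 0)) := by
    have heq : ∀ n : ℕ, 1 ≤ n → (∫ z in ball (0:ℂ) (r n), g z)
        = (Real.pi * (r n) ^ 2 : ℝ) * g 0 := by
      intro n hn
      apply disc_mean_r hd _ (hr1 n)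
      simp only [hr]
      have : 1 / ((n:ℝ) + 1) < 1 := by
        rw [div_lt_one (by positivity)]
        have := Nat.one_le_cast (α := ℝ).mpr hn
        linarith
      linarith
    have htend : Filter.Tendsto (fun n : ℕ => ((Real.pi * (r n) ^ 2 : ℝ) : ℂ) * g 0)
        Filter.atTop (nhds ((Real.pi : ℂ) * g 0)) := by
      have h1 : Filter.Tendsto r Filter.atTop (nhds 1) := by
        have := tendsto_one_div_add_atTop_nhds_zero_nat (𝕜 := ℝ)
        simpa [hr] using Filter.Tendsto.const_sub 1 this
      have : Filter.Tendsto (fun n : ℕ => (Real.pi * (r n) ^ 2 : ℝ)) Filter.atTop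
          (nhds (Real.pi * 1 ^ 2)) := (tendsto_const_nhds.mul ((h1.pow 2)))
      have := ((Complex.continuous_ofReal.tendsto _).comp this).mul_const (g 0)
      simpa using this
    refine htend.congr' ?_
    filter_upwards [Filter.eventually_ge_atTop 1] with n hn
    exact (heq n hn).symm
  exact tendsto_nhds_unique hlim hlim2

theorem stmt_4 (θ : ℝ) (hθ : θ ∈ Set.Ioo 0 (Real.pi / 2)) :
    (∀ F₁ F₂ : ℂ → ℂ, DifferentiableOn ℂ F₁ (Metric.ball 0 1) →
      DifferentiableOn ℂ F₂ (Metric.ball 0 1) →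
      MemLp F₁ 2 (volume.restrict (Metric.ball (0:ℂ) 1)) →
      MemLp F₂ 2 (volume.restrict (Metric.ball (0:ℂ) 1)) →
      (∀ z ∈ Metric.ball (0:ℂ) 1,
        (Real.cos θ : ℂ) * F₁ z + (Real.sin θ : ℂ) * z * F₂ z = 1) →
      Real.pi / Real.cos θ ^ 2 ≤
        ∫ z in Metric.ball (0:ℂ) 1, ‖F₁ z‖ ^ 2 + ‖F₂ z‖ ^ 2) ∧
    (∀ z ∈ Metric.ball (0:ℂ) 1,
      (Real.cos θ : ℂ) * (1 / (Real.cos θ : ℂ)) + (Real.sin θ : ℂ) * z * 0 = 1) ∧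
    (∫ z in Metric.ball (0:ℂ) 1,
        ‖(1 / (Real.cos θ : ℂ))‖ ^ 2 + ‖(0:ℂ)‖ ^ 2) =
      Real.pi / Real.cos θ ^ 2 := by
  obtain ⟨hθ0, hθ1⟩ := hθ
  have hc : 0 < Real.cos θ := Real.cos_pos_of_mem_Ioo ⟨by linarith, hθ1⟩
  have hcne : (Real.cos θ : ℂ) ≠ 0 := by exact_mod_cast (Complex.ofReal_ne_zero.mpr hc.ne')
  have hvol : volume.real (ball (0:ℂ) 1) = Real.pi := by
    rw [measureReal_def, Complex.volume_ball]
    simp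
  haveI : IsFiniteMeasure (volume.restrict (ball (0:ℂ) 1)) :=
    ⟨by rw [Measure.restrict_apply_univ]; exact measure_ball_lt_top⟩
  refine ⟨?_, ?_, ?_⟩
  · intro F₁ F₂ hd1 hd2 hL1 hL2 hcon
    set c := Real.cos θ with hcdef
    set s := Real.sin θ with hsdef
    set a : ℝ := 1 / c with hadef
    set t : ℝ := s / c with htdef
    set g : ℂ → ℂ := fun z => z * F₂ z with hgdef
    -- integrabilities
    have hF1sq : Integrable (fun z => ‖F₁ z‖ ^ 2)
        (volume.restrict (ball (0:ℂ) 1)) := by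
      have := hL1.integrable_norm_rpow (by norm_num) (by norm_num)
      simpa [ENNReal.toReal_ofNat,
        Real.rpow_natCast _ 2] using this
    have hF2sq : Integrable (fun z => ‖F₂ z‖ ^ 2)
        (volume.restrict (ball (0:ℂ) 1)) := by
      have := hL2.integrable_norm_rpow (by norm_num) (by norm_num)
      simpa [ENNReal.toReal_ofNat,
        Real.rpow_natCast _ 2] using this
    have hF2int : Integrable F₂ (volume.restrict (ball (0:ℂ) 1)) :=
      hL2.integrable (by norm_num)
    have hgmeas : AEStronglyMeasurable g (volume.restrict (ball (0:ℂ) 1)) :=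
      (aestronglyMeasurable_id.mul hF2int.1)
    have hbd : ∀ᵐ z ∂(volume.restrict (ball (0:ℂ) 1)), ‖g z‖ ≤ ‖F₂ z‖ := by
      refine (ae_restrict_iff' measurableSet_ball).mpr (ae_of_all _ fun z hz => ?_)
      rw [mem_ball_zero_iff] at hz
      simp only [hgdef, norm_mul]
      nlinarith [norm_nonneg (F₂ z), norm_nonneg (z : ℂ)]
    have hgint : Integrable g (volume.restrict (ball (0:ℂ) 1)) :=
      hF2int.norm.mono' hgmeas hbd
    have hgsq : Integrable (fun z => ‖g z‖ ^ 2)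
        (volume.restrict (ball (0:ℂ) 1)) := by
      refine hF2sq.mono' ((continuous_norm.comp_aestronglyMeasurable
        hgmeas).pow 2) ?_
      filter_upwards [hbd] with z hz
      simp only [Real.norm_eq_abs, abs_of_nonneg (pow_nonneg (norm_nonneg _) 2)]
      nlinarith [norm_nonneg (g z), norm_nonneg (F₂ z)]
    have hgd : DifferentiableOn ℂ g (ball 0 1) :=
      (differentiable_id.differentiableOn).mul hd2
    have hg0 : g 0 = 0 := by simp [hgdef]
    have hgmean : ∫ z in ball (0:ℂ) 1, g z = 0 := by
      rw [disc_mean hgd hgint, hg0, mul_zero]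
    -- pointwise identity for |F₁|²
    have hF1eq : ∀ z ∈ ball (0:ℂ) 1,
        ‖F₁ z‖ ^ 2
          = a ^ 2 - (2 * a * t) * (g z).re + t ^ 2 * ‖g z‖ ^ 2 := by
      intro z hz
      have h := hcon z hz
      have hca : (c:ℂ) * (a:ℂ) = 1 := by
        rw [hadef]; push_cast; rw [mul_one_div, div_self hcne]
      have hct : (c:ℂ) * (t:ℂ) = (s:ℂ) := by
        rw [htdef]; push_cast; field_simp
      have hF1z : F₁ z = (a : ℂ) - (t : ℂ) * g z := by
        apply mul_left_cancel₀ hcne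
        rw [mul_sub, ← mul_assoc, hca, hct]
        have hgz : (c:ℂ) * F₁ z = 1 - (s:ℂ) * g z := by
          simp only [hgdef]
          linear_combination h
        rw [hgz]
      rw [hF1z]
      rw [Complex.sq_norm, Complex.sq_norm, Complex.normSq_apply, Complex.normSq_apply]
      simp only [Complex.sub_re, Complex.sub_im, Complex.mul_re, Complex.mul_im,
        Complex.ofReal_re, Complex.ofReal_im]
      ring
    -- put it together
    have hsplit : (∫ z in ball (0:ℂ) 1, ‖F₁ z‖ ^ 2 + ‖F₂ z‖ ^ 2)
        = (∫ z in ball (0:ℂ) 1, ‖F₁ z‖ ^ 2)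
          + ∫ z in ball (0:ℂ) 1, ‖F₂ z‖ ^ 2 :=
      integral_add hF1sq hF2sq
    have hre_int : Integrable (fun z => (g z).re) (volume.restrict (ball (0:ℂ) 1)) :=
      hgint.re
    have hF1val : (∫ z in ball (0:ℂ) 1, ‖F₁ z‖ ^ 2)
        = Real.pi * a ^ 2 + t ^ 2 * ∫ z in ball (0:ℂ) 1, ‖g z‖ ^ 2 := by
      rw [setIntegral_congr_fun measurableSet_ball hF1eq]
      have hi1 : Integrable (fun z : ℂ => a ^ 2 - 2 * a * t * (g z).re)
          (volume.restrict (ball (0:ℂ) 1)) :=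
        (integrable_const _).sub (hre_int.const_mul _)
      have hi2 : Integrable (fun z : ℂ => t ^ 2 * ‖g z‖ ^ 2)
          (volume.restrict (ball (0:ℂ) 1)) := hgsq.const_mul _
      have hi3 : Integrable (fun _ : ℂ => a ^ 2) (volume.restrict (ball (0:ℂ) 1)) :=
        integrable_const _
      rw [integral_add hi1 hi2, integral_sub hi3 (hre_int.const_mul _),
        setIntegral_const, integral_const_mul, integral_const_mul]
      have : ∫ z in ball (0:ℂ) 1, (g z).re = 0 := by
        have h2 := integral_re hgint
        simp only [RCLike.re_to_complex, hgmean, Complex.zero_re] at h2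
        exact h2
      rw [this, hvol]
      simp [smul_eq_mul]
    rw [hsplit, hF1val]
    have h1 : 0 ≤ ∫ z in ball (0:ℂ) 1, ‖g z‖ ^ 2 :=
      integral_nonneg fun z => by positivity
    have h2 : 0 ≤ ∫ z in ball (0:ℂ) 1, ‖F₂ z‖ ^ 2 :=
      integral_nonneg fun z => by positivity
    have : Real.pi / Real.cos θ ^ 2 = Real.pi * a ^ 2 := by
      rw [hadef]
      field_simp
      exact div_self (pow_pos hc 2).ne'
    rw [this]
    nlinarith [sq_nonneg t]
  · intro z hz
    rw [mul_zero, add_zero, mul_one_div, div_self hcne]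
  · have habs : ‖(1 / (Real.cos θ : ℂ))‖ = 1 / Real.cos θ := by
      rw [norm_div, norm_one, Complex.norm_real, Real.norm_eq_abs, abs_of_pos hc]
    simp only [habs, norm_zero]
    rw [setIntegral_const, smul_eq_mul, hvol]
    rw [div_pow, one_pow]
    field_simp
    ring
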